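/- Let k be a field and t ≥ 3, y ≥ 3 integers. Let X = J_t ⊕ J_1 and Y = J_y ⊕ J_2, and let C : X → Y be the k[T]-linear map with components: multiplication by T^{y−2} from J_t to J_y; the canonical reduction map (multiplication by 1) from J_t to J_2; multiplication by T from J_1 to J_2; and zero from J_1 to J_y. Then T²∘C = 0 and the triple (X, Y, C) is indecomposable. -/

import Mathlib

open Polynomial

/-- `J K a` is the `K[T]`-module `K[T]/(T^a)` (with `T` the polynomial variable `X`). -/
abbrev J (K : Type*) [Field K] (a : ℕ) : Type _ :=
  Polynomial K ⧸ Ideal.span {(X : Polynomial K) ^ a}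

/-- Multiplication by `T^e` as a `K[T]`-linear map `J_a → J_b`; it is well defined
when `b ≤ e + a`, and we set it to `0` otherwise. -/
noncomputable def mulTpow (K : Type*) [Field K] (a b e : ℕ) :
    J K a →ₗ[Polynomial K] J K b :=
  if h : b ≤ e + a then
    Submodule.liftQ (Ideal.span {(X : Polynomial K) ^ a})
      ((Ideal.span {(X : Polynomial K) ^ b}).mkQ ∘ₗ
        ((X : Polynomial K) ^ e • (LinearMap.id : Polynomial K →ₗ[Polynomial K] Polynomial K)))
      (by
        refine Submodule.span_le.mpr ?_
        intro x hx
        rw [Set.mem_singleton_iff] at hx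
        subst hx
        simp only [SetLike.mem_coe, LinearMap.mem_ker, LinearMap.comp_apply,
          LinearMap.smul_apply, LinearMap.id_apply, Submodule.mkQ_apply,
          Submodule.Quotient.mk_eq_zero, smul_eq_mul]
        exact Ideal.mem_span_singleton.mpr (by
          rw [← pow_add]; exact pow_dvd_pow X h))
  else 0

/-- A triple `(M, N, C)` is indecomposable if `M ⊕ N ≠ 0` and the only idempotent
endomorphism pairs `(F, G)` (i.e. `G ∘ C = C ∘ F`, `F² = F`, `G² = G`) are `(0, 0)` and
`(id, id)`. -/
def TripleIndecomposable {K : Type*} [Field K] {M N : Type*}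
    [AddCommGroup M] [Module (Polynomial K) M]
    [AddCommGroup N] [Module (Polynomial K) N] (C : M →ₗ[Polynomial K] N) : Prop :=
  (Nontrivial M ∨ Nontrivial N) ∧
  ∀ (F : M →ₗ[Polynomial K] M) (G : N →ₗ[Polynomial K] N),
    G ∘ₗ C = C ∘ₗ F → F ∘ₗ F = F → G ∘ₗ G = G →
      (F = 0 ∧ G = 0) ∨ (F = LinearMap.id ∧ G = LinearMap.id)

section Aux
variable {K : Type*} [Field K]

noncomputable abbrev jmk (K : Type*) [Field K] (a : ℕ) (p : Polynomial K) :
    Polynomial K ⧸ Ideal.span {(X : Polynomial K) ^ a} :=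
  Submodule.Quotient.mk p

lemma jmk_smul (a : ℕ) (p q : Polynomial K) : p • jmk K a q = jmk K a (p * q) := by
  rw [← Submodule.Quotient.mk_smul, smul_eq_mul]

lemma jmk_add (a : ℕ) (p q : Polynomial K) : jmk K a p + jmk K a q = jmk K a (p + q) := by
  rw [← Submodule.Quotient.mk_add]

lemma jmk_zero_iff (a : ℕ) (p : Polynomial K) :
    jmk K a p = 0 ↔ (X : Polynomial K) ^ a ∣ p := by
  rw [Submodule.Quotient.mk_eq_zero, Ideal.mem_span_singleton]

lemma jmk_eq_iff (a : ℕ) (p q : Polynomial K) :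
    jmk K a p = jmk K a q ↔ (X : Polynomial K) ^ a ∣ p - q := by
  rw [Submodule.Quotient.eq, Ideal.mem_span_singleton]

end Aux

section Aux2
variable {K : Type*} [Field K]



lemma mulTpow_jmk (a b e : ℕ) (h : b ≤ e + a) (p : Polynomial K) :
    mulTpow K a b e (jmk K a p) = jmk K b ((X : Polynomial K) ^ e * p) := by
  rw [mulTpow, dif_pos h]
  rw [show jmk K a p = Submodule.Quotient.mk p from rfl, Submodule.liftQ_apply]
  simp [smul_eq_mul, jmk]

lemma pow_dvd_of_dvd_mul {n : ℕ} {u v : Polynomial K} (hu : u.coeff 0 ≠ 0)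
    (h : (X : Polynomial K) ^ n ∣ u * v) : (X : Polynomial K) ^ n ∣ v := by
  have hX : ¬ (X : Polynomial K) ∣ u := by rw [X_dvd_iff]; exact hu
  have hc : IsCoprime ((X : Polynomial K) ^ n) u :=
    ((Polynomial.prime_X.coprime_iff_not_dvd).mpr hX).pow_left
  exact hc.dvd_of_dvd_mul_left h

lemma pair_eq (a b : ℕ) (p r : Polynomial K) :
    ((jmk K a p, jmk K b r) : J K a × J K b) =
      p • ((jmk K a 1, 0) : J K a × J K b) + r • ((0, jmk K b 1) : J K a × J K b) := by
  rw [Prod.smul_mk, Prod.smul_mk, jmk_smul, jmk_smul, mul_one, mul_one, smul_zero, smul_zero,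
    Prod.mk_add_mk, add_zero, zero_add]

lemma jmk_zero (a : ℕ) : jmk K a (0 : Polynomial K) = 0 :=
  Submodule.Quotient.mk_zero _

lemma map_pair {a b : ℕ} {M : Type*} [AddCommGroup M] [Module (Polynomial K) M]
    (f : J K a × J K b →ₗ[Polynomial K] M) (p r : Polynomial K) :
    f (jmk K a p, jmk K b r)
      = p • f (jmk K a 1, jmk K b 0) + r • f (jmk K a 0, jmk K b 1) := by
  rw [jmk_zero, jmk_zero, pair_eq, map_add, map_smul, map_smul]

lemma lin_ext {a b : ℕ} {M : Type*} [AddCommGroup M] [Module (Polynomial K) M]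
    (f g : J K a × J K b →ₗ[Polynomial K] M)
    (h1 : f (jmk K a 1, jmk K b 0) = g (jmk K a 1, jmk K b 0))
    (h2 : f (jmk K a 0, jmk K b 1) = g (jmk K a 0, jmk K b 1)) :
    f = g := by
  refine LinearMap.ext fun x => ?_
  obtain ⟨p, hp⟩ := Submodule.Quotient.mk_surjective _ x.1
  obtain ⟨r, hr⟩ := Submodule.Quotient.mk_surjective _ x.2
  have hx : x = (jmk K a p, jmk K b r) := by
    rw [show jmk K a p = x.1 from hp, show jmk K b r = x.2 from hr]
  rw [hx, map_pair f, h1, h2]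
  exact (map_pair g p r).symm

end Aux2

section Main
variable {K : Type*} [Field K]

lemma main_poly (t y : ℕ) (ht : 3 ≤ t) (hy : 3 ≤ y)
    (a b c d a' b' c' d' : Polynomial K)
    (hb2 : (X:Polynomial K)^(t-1) ∣ b)
    (hR1 : (X:Polynomial K)^y ∣ X^(y-2)*a' + b' - X^(y-2)*a)
    (hR2 : (X:Polynomial K)^2 ∣ X^(y-2)*c' + d' - (a + X*c))
    (hR3 : (X:Polynomial K)^y ∣ X*b' - X^(y-2)*b)
    (hR4 : (X:Polynomial K)^2 ∣ X*d' - (b + X*d))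
    (hI1 : (X:Polynomial K)^t ∣ a*a + c*b - a)
    (hI2 : (X:Polynomial K) ∣ a*c + c*d - c)
    (hI3 : (X:Polynomial K)^t ∣ b*a + d*b - b)
    (hI4 : (X:Polynomial K) ∣ b*c + d*d - d)
    (hI1' : (X:Polynomial K)^y ∣ a'*a' + c'*b' - a')
    (hI2' : (X:Polynomial K)^2 ∣ a'*c' + c'*d' - c')
    (hI3' : (X:Polynomial K)^y ∣ b'*a' + d'*b' - b')
    (hI4' : (X:Polynomial K)^2 ∣ b'*c' + d'*d' - d') :
    ∃ ε : K, ε * ε = ε ∧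
      (X:Polynomial K)^t ∣ a - C ε ∧ (X:Polynomial K) ∣ c ∧
      (X:Polynomial K)^t ∣ b ∧ (X:Polynomial K) ∣ d - C ε ∧
      (X:Polynomial K)^y ∣ a' - C ε ∧ (X:Polynomial K)^2 ∣ c' ∧
      (X:Polynomial K)^y ∣ b' ∧ (X:Polynomial K)^2 ∣ d' - C ε := by
  set ε := a.coeff 0 with hε
  have hXne : (X : Polynomial K) ≠ 0 := X_ne_zero
  have hX1 : (X : Polynomial K) ∣ X^1 := by rw [pow_one]
  have hbX2 : (X:Polynomial K)^2 ∣ b := dvd_trans (pow_dvd_pow X (by omega)) hb2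
  have hbX : (X:Polynomial K) ∣ b := dvd_trans (dvd_pow_self X two_ne_zero) hbX2
  -- X ∣ d' - d
  have hd'd : (X:Polynomial K) ∣ d' - d := by
    have h : (X:Polynomial K)^2 ∣ X * (d' - d) := by
      have h0 := dvd_add hR4 hbX2
      rwa [show X*d' - (b + X*d) + b = X*(d'-d) by ring] at h0
    rw [pow_two] at h
    exact (mul_dvd_mul_iff_left hXne).mp h
  -- X ∣ d' - a
  have hd'a : (X:Polynomial K) ∣ d' - a := by
    have h0 : (X:Polynomial K) ∣ X^(y-2)*c' + d' - (a + X*c) :=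
      dvd_trans (dvd_pow_self X two_ne_zero) hR2
    have h1 : (X:Polynomial K) ∣ X^(y-2)*c' := (dvd_pow_self X (by omega)).mul_right c'
    have h2 := (h0.sub h1).add (dvd_mul_right (X:Polynomial K) c)
    rwa [show X^(y-2)*c' + d' - (a + X*c) - X^(y-2)*c' + X*c = d' - a by ring] at h2
  have hd0 : d.coeff 0 = ε := by
    have h : (X:Polynomial K) ∣ d - a := by
      have := hd'a.sub hd'd
      rwa [show d' - a - (d' - d) = d - a by ring] at this
    rw [X_dvd_iff, coeff_sub, sub_eq_zero] at h
    exact h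
  have hd'0 : d'.coeff 0 = ε := by
    have h := hd'a
    rw [X_dvd_iff, coeff_sub, sub_eq_zero] at h
    exact h
  -- idempotency of ε
  have hεε : ε * ε = ε := by
    have h : (X:Polynomial K) ∣ a*a - a := by
      have h0 : (X:Polynomial K) ∣ a*a + c*b - a := dvd_trans (dvd_pow_self X (by omega)) hI1
      have h1 := h0.sub (hbX.mul_left c)
      rwa [show a*a + c*b - a - c*b = a*a - a by ring] at h1
    rw [X_dvd_iff, coeff_sub, mul_coeff_zero, sub_eq_zero] at h
    exact h
  have hCε : (C ε) * (C ε) = (C ε : Polynomial K) := by rw [← C_mul, hεε]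
  have hμ : 2*ε - 1 ≠ 0 := by
    intro h0
    have h1 : (2*ε - 1)*(2*ε - 1) = 1 := by linear_combination 4*hεε
    rw [h0, mul_zero] at h1
    exact zero_ne_one h1
  -- X ∣ c
  have hc : (X:Polynomial K) ∣ c := by
    have h : (X:Polynomial K)^1 ∣ (a + d - 1) * c := by
      rw [pow_one, show (a + d - 1)*c = a*c + c*d - c by ring]; exact hI2
    refine (pow_one (X:Polynomial K)) ▸ pow_dvd_of_dvd_mul ?_ h
    simp [coeff_sub, coeff_add, hd0]
    intro h0; exact hμ (by linear_combination h0)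
  -- X^t ∣ b
  have hb : (X:Polynomial K)^t ∣ b := by
    have h : (X:Polynomial K)^t ∣ (a + d - 1) * b := by
      rw [show (a + d - 1)*b = b*a + d*b - b by ring]; exact hI3
    refine pow_dvd_of_dvd_mul ?_ h
    simp [coeff_sub, coeff_add, hd0]
    intro h0; exact hμ (by linear_combination h0)
  -- X ∣ d - C ε
  have hd : (X:Polynomial K) ∣ d - C ε := by
    have h : (X:Polynomial K)^1 ∣ (d + C ε - 1) * (d - C ε) := by
      rw [pow_one, show (d + C ε - 1)*(d - C ε) = (b*c + d*d - d) - b*c - (C ε * C ε - C ε) by ring,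
        hCε, sub_self, sub_zero]
      exact hI4.sub (hbX.mul_right c)
    refine (pow_one (X:Polynomial K)) ▸ pow_dvd_of_dvd_mul ?_ h
    simp [coeff_sub, coeff_add, hd0, coeff_C_zero]
    intro h0; exact hμ (by linear_combination h0)
  -- X^t ∣ a - C ε
  have ha : (X:Polynomial K)^t ∣ a - C ε := by
    have h : (X:Polynomial K)^t ∣ (a + C ε - 1) * (a - C ε) := by
      rw [show (a + C ε - 1)*(a - C ε) = (a*a + c*b - a) - c*b - (C ε * C ε - C ε) by ring,
        hCε, sub_self, sub_zero]
      exact hI1.sub (hb.mul_left c)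
    refine pow_dvd_of_dvd_mul ?_ h
    simp [coeff_sub, coeff_add, coeff_C_zero]
    intro h0; exact hμ (by linear_combination h0)
  -- X^(y-1) ∣ b'
  have hb'1 : (X:Polynomial K)^(y-1) ∣ b' := by
    have h0 : (X:Polynomial K)^y ∣ X^(y-2)*b := by
      have h1 := mul_dvd_mul_left ((X:Polynomial K)^(y-2)) hbX2
      rwa [← pow_add, show y-2+2 = y by omega] at h1
    have h2 := hR3.add h0
    rw [show X*b' - X^(y-2)*b + X^(y-2)*b = X*b' by ring,
      show y = 1 + (y-1) by omega, pow_add, pow_one] at h2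
    exact (mul_dvd_mul_iff_left hXne).mp h2
  -- X ∣ a' - a
  have ha'a : (X:Polynomial K) ∣ a' - a := by
    have h0 : (X:Polynomial K)^(y-1) ∣ X^(y-2)*a' + b' - X^(y-2)*a :=
      dvd_trans (pow_dvd_pow X (by omega)) hR1
    have h1 := h0.sub hb'1
    rw [show X^(y-2)*a' + b' - X^(y-2)*a - b' = X^(y-2)*(a'-a) by ring,
      show y-1 = (y-2) + 1 by omega, pow_add, pow_one] at h1
    exact (mul_dvd_mul_iff_left (pow_ne_zero _ hXne)).mp h1
  have ha'0 : a'.coeff 0 = ε := by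
    have h := ha'a
    rw [X_dvd_iff, coeff_sub, sub_eq_zero] at h
    exact h
  -- X^y ∣ b'
  have hb' : (X:Polynomial K)^y ∣ b' := by
    have h : (X:Polynomial K)^y ∣ (a' + d' - 1) * b' := by
      rw [show (a' + d' - 1)*b' = b'*a' + d'*b' - b' by ring]; exact hI3'
    refine pow_dvd_of_dvd_mul ?_ h
    simp [coeff_sub, coeff_add, hd'0, ha'0]
    intro h0; exact hμ (by linear_combination h0)
  -- X^2 ∣ c'
  have hc' : (X:Polynomial K)^2 ∣ c' := by
    have h : (X:Polynomial K)^2 ∣ (a' + d' - 1) * c' := by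
      rw [show (a' + d' - 1)*c' = a'*c' + c'*d' - c' by ring]; exact hI2'
    refine pow_dvd_of_dvd_mul ?_ h
    simp [coeff_sub, coeff_add, hd'0, ha'0]
    intro h0; exact hμ (by linear_combination h0)
  -- X^2 ∣ d' - C ε
  have hd' : (X:Polynomial K)^2 ∣ d' - C ε := by
    have h : (X:Polynomial K)^2 ∣ (d' + C ε - 1) * (d' - C ε) := by
      rw [show (d' + C ε - 1)*(d' - C ε)
          = (b'*c' + d'*d' - d') - b'*c' - (C ε * C ε - C ε) by ring,
        hCε, sub_self, sub_zero]
      exact hI4'.sub (hc'.mul_left b')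
    refine pow_dvd_of_dvd_mul ?_ h
    simp [coeff_sub, coeff_add, hd'0, coeff_C_zero]
    intro h0; exact hμ (by linear_combination h0)
  -- X^y ∣ a' - C ε
  have ha' : (X:Polynomial K)^y ∣ a' - C ε := by
    have h : (X:Polynomial K)^y ∣ (a' + C ε - 1) * (a' - C ε) := by
      rw [show (a' + C ε - 1)*(a' - C ε)
          = (a'*a' + c'*b' - a') - c'*b' - (C ε * C ε - C ε) by ring,
        hCε, sub_self, sub_zero]
      exact hI1'.sub (hb'.mul_left c')
    refine pow_dvd_of_dvd_mul ?_ h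
    simp [coeff_sub, coeff_add, ha'0, coeff_C_zero]
    intro h0; exact hμ (by linear_combination h0)
  exact ⟨ε, hεε, ha, hc, hb, hd, ha', hc', hb', hd'⟩

end Main

set_option maxHeartbeats 800000

/-- For `t ≥ 3`, `y ≥ 3`, the map `C : J_t ⊕ J_1 → J_y ⊕ J_2` with components
`T^{y-2} : J_t → J_y`, the canonical reduction `J_t → J_2`, `T : J_1 → J_2`, and
`0 : J_1 → J_y` satisfies `T² ∘ C = 0`, and the triple `(J_t ⊕ J_1, J_y ⊕ J_2, C)` is
indecomposable. -/
theorem triple_2x2_indecomposable (K : Type*) [Field K] (t y : ℕ)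
    (ht : 3 ≤ t) (hy : 3 ≤ y) :
    (∀ x, ((X : Polynomial K) ^ 2) •
      (LinearMap.prod
        ((mulTpow K t y (y - 2)).coprod (0 : J K 1 →ₗ[Polynomial K] J K y))
        ((mulTpow K t 2 0).coprod (mulTpow K 1 2 1))) x = 0) ∧
    TripleIndecomposable
      (LinearMap.prod
        ((mulTpow K t y (y - 2)).coprod (0 : J K 1 →ₗ[Polynomial K] J K y))
        ((mulTpow K t 2 0).coprod (mulTpow K 1 2 1))) := by
  have hCapp : ∀ p r : Polynomial K,
      (LinearMap.prod
        ((mulTpow K t y (y - 2)).coprod (0 : J K 1 →ₗ[Polynomial K] J K y))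
        ((mulTpow K t 2 0).coprod (mulTpow K 1 2 1))) (jmk K t p, jmk K 1 r)
      = (jmk K y ((X:Polynomial K)^(y-2)*p), jmk K 2 (p + X*r)) := by
    intro p r
    rw [LinearMap.prod_apply]
    simp only [Function.prod, LinearMap.coprod_apply, LinearMap.zero_apply]
    rw [mulTpow_jmk _ _ _ (by omega : y ≤ (y-2) + t),
        mulTpow_jmk _ _ _ (by omega : 2 ≤ 0 + t),
        mulTpow_jmk _ _ _ (by norm_num : 2 ≤ 1 + 1),
        add_zero, jmk_add, pow_zero, one_mul, pow_one]
  constructor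
  · -- T² ∘ C = 0
    intro x
    obtain ⟨p, hp⟩ := Submodule.Quotient.mk_surjective _ x.1
    obtain ⟨r, hr⟩ := Submodule.Quotient.mk_surjective _ x.2
    have hx : x = (jmk K t p, jmk K 1 r) := by
      rw [show jmk K t p = x.1 from hp, show jmk K 1 r = x.2 from hr]
    rw [hx, hCapp, Prod.smul_mk, jmk_smul, jmk_smul, Prod.mk_eq_zero,
      jmk_zero_iff, jmk_zero_iff]
    exact ⟨⟨p, by rw [← mul_assoc, ← pow_add, show 2 + (y-2) = y by omega]⟩,
      dvd_mul_right _ _⟩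
  refine ⟨Or.inl ?_, ?_⟩
  · -- nontriviality
    refine ⟨(jmk K t 1, jmk K 1 0), 0, fun h0 => ?_⟩
    have h1 := (Prod.ext_iff.mp h0).1
    rw [Prod.fst_zero, jmk_zero_iff] at h1
    exact Polynomial.not_isUnit_X
      ((isUnit_pow_iff (show t ≠ 0 by omega)).mp (isUnit_of_dvd_one h1))
  intro F G hGC hFF hGG
  -- representatives of the matrix entries
  obtain ⟨a, haF⟩ := Submodule.Quotient.mk_surjective _ (F (jmk K t 1, jmk K 1 0)).1
  obtain ⟨c, hcF⟩ := Submodule.Quotient.mk_surjective _ (F (jmk K t 1, jmk K 1 0)).2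
  obtain ⟨b, hbF⟩ := Submodule.Quotient.mk_surjective _ (F (jmk K t 0, jmk K 1 1)).1
  obtain ⟨d, hdF⟩ := Submodule.Quotient.mk_surjective _ (F (jmk K t 0, jmk K 1 1)).2
  obtain ⟨a', haG⟩ := Submodule.Quotient.mk_surjective _ (G (jmk K y 1, jmk K 2 0)).1
  obtain ⟨c', hcG⟩ := Submodule.Quotient.mk_surjective _ (G (jmk K y 1, jmk K 2 0)).2
  obtain ⟨b', hbG⟩ := Submodule.Quotient.mk_surjective _ (G (jmk K y 0, jmk K 2 1)).1
  obtain ⟨d', hdG⟩ := Submodule.Quotient.mk_surjective _ (G (jmk K y 0, jmk K 2 1)).2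
  have hFe1 : F (jmk K t 1, jmk K 1 0) = (jmk K t a, jmk K 1 c) := by
    rw [show jmk K t a = (F (jmk K t 1, jmk K 1 0)).1 from haF,
        show jmk K 1 c = (F (jmk K t 1, jmk K 1 0)).2 from hcF]
  have hFe2 : F (jmk K t 0, jmk K 1 1) = (jmk K t b, jmk K 1 d) := by
    rw [show jmk K t b = (F (jmk K t 0, jmk K 1 1)).1 from hbF,
        show jmk K 1 d = (F (jmk K t 0, jmk K 1 1)).2 from hdF]
  have hGe1 : G (jmk K y 1, jmk K 2 0) = (jmk K y a', jmk K 2 c') := by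
    rw [show jmk K y a' = (G (jmk K y 1, jmk K 2 0)).1 from haG,
        show jmk K 2 c' = (G (jmk K y 1, jmk K 2 0)).2 from hcG]
  have hGe2 : G (jmk K y 0, jmk K 2 1) = (jmk K y b', jmk K 2 d') := by
    rw [show jmk K y b' = (G (jmk K y 0, jmk K 2 1)).1 from hbG,
        show jmk K 2 d' = (G (jmk K y 0, jmk K 2 1)).2 from hdG]
  have hFapp : ∀ p r : Polynomial K, F (jmk K t p, jmk K 1 r)
      = (jmk K t (p*a + r*b), jmk K 1 (p*c + r*d)) := by
    intro p r
    rw [map_pair F p r, hFe1, hFe2, Prod.smul_mk, Prod.smul_mk,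
      jmk_smul, jmk_smul, jmk_smul, jmk_smul, Prod.mk_add_mk, jmk_add, jmk_add]
  have hGapp : ∀ p r : Polynomial K, G (jmk K y p, jmk K 2 r)
      = (jmk K y (p*a' + r*b'), jmk K 2 (p*c' + r*d')) := by
    intro p r
    rw [map_pair G p r, hGe1, hGe2, Prod.smul_mk, Prod.smul_mk,
      jmk_smul, jmk_smul, jmk_smul, jmk_smul, Prod.mk_add_mk, jmk_add, jmk_add]
  -- well-definedness constraint: X^(t-1) ∣ b
  have hb2 : (X:Polynomial K)^(t-1) ∣ b := by
    have hw0 : ((jmk K t (0:Polynomial K), jmk K 1 (X:Polynomial K)) : J K t × J K 1) = 0 := by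
      rw [Prod.mk_eq_zero, jmk_zero_iff, jmk_zero_iff]
      exact ⟨dvd_zero _, by rw [pow_one]⟩
    have hw := hFapp 0 X
    rw [hw0, map_zero] at hw
    have h1 : jmk K t (0*a + X*b) = 0 := by
      have := (Prod.ext_iff.mp hw).1
      rw [Prod.fst_zero] at this
      exact this.symm
    rw [jmk_zero_iff, show (0*a + X*b : Polynomial K) = X*b by ring,
      show t = 1 + (t-1) by omega, pow_add, pow_one] at h1
    exact (mul_dvd_mul_iff_left (X_ne_zero : (X:Polynomial K) ≠ 0)).mp h1
  -- intertwining relations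
  have hR := LinearMap.congr_fun hGC (jmk K t 1, jmk K 1 0)
  rw [LinearMap.comp_apply, LinearMap.comp_apply, hCapp, hGapp, hFapp, hCapp,
    Prod.mk.injEq, jmk_eq_iff, jmk_eq_iff] at hR
  have hR1 : (X:Polynomial K)^y ∣ X^(y-2)*a' + b' - X^(y-2)*a := by
    have e : (X^(y-2)*a' + b' : Polynomial K) - X^(y-2)*a
        = (X^(y-2)*1*a' + (1+X*0)*b') - X^(y-2)*(1*a+0*b) := by ring
    rw [e]; exact hR.1
  have hR2 : (X:Polynomial K)^2 ∣ X^(y-2)*c' + d' - (a + X*c) := by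
    have e : (X^(y-2)*c' + d' : Polynomial K) - (a + X*c)
        = (X^(y-2)*1*c' + (1+X*0)*d') - ((1*a+0*b) + X*(1*c+0*d)) := by ring
    rw [e]; exact hR.2
  have hS := LinearMap.congr_fun hGC (jmk K t 0, jmk K 1 1)
  rw [LinearMap.comp_apply, LinearMap.comp_apply, hCapp, hGapp, hFapp, hCapp,
    Prod.mk.injEq, jmk_eq_iff, jmk_eq_iff] at hS
  have hR3 : (X:Polynomial K)^y ∣ X*b' - X^(y-2)*b := by
    have e : (X*b' : Polynomial K) - X^(y-2)*b
        = (X^(y-2)*0*a' + (0+X*1)*b') - X^(y-2)*(0*a+1*b) := by ring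
    rw [e]; exact hS.1
  have hR4 : (X:Polynomial K)^2 ∣ X*d' - (b + X*d) := by
    have e : (X*d' : Polynomial K) - (b + X*d)
        = (X^(y-2)*0*c' + (0+X*1)*d') - ((0*a+1*b) + X*(0*c+1*d)) := by ring
    rw [e]; exact hS.2
  -- idempotency relations for F
  have hP := LinearMap.congr_fun hFF (jmk K t 1, jmk K 1 0)
  rw [LinearMap.comp_apply, hFapp, hFapp, Prod.mk.injEq, jmk_eq_iff, jmk_eq_iff] at hP
  have hI1 : (X:Polynomial K)^t ∣ a*a + c*b - a := by
    have e : (a*a + c*b : Polynomial K) - a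
        = ((1*a+0*b)*a + (1*c+0*d)*b) - (1*a+0*b) := by ring
    rw [e]; exact hP.1
  have hI2 : (X:Polynomial K) ∣ a*c + c*d - c := by
    have e : (a*c + c*d : Polynomial K) - c
        = ((1*a+0*b)*c + (1*c+0*d)*d) - (1*c+0*d) := by ring
    rw [← pow_one (X:Polynomial K), e]; exact hP.2
  have hQ := LinearMap.congr_fun hFF (jmk K t 0, jmk K 1 1)
  rw [LinearMap.comp_apply, hFapp, hFapp, Prod.mk.injEq, jmk_eq_iff, jmk_eq_iff] at hQ
  have hI3 : (X:Polynomial K)^t ∣ b*a + d*b - b := by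
    have e : (b*a + d*b : Polynomial K) - b
        = ((0*a+1*b)*a + (0*c+1*d)*b) - (0*a+1*b) := by ring
    rw [e]; exact hQ.1
  have hI4 : (X:Polynomial K) ∣ b*c + d*d - d := by
    have e : (b*c + d*d : Polynomial K) - d
        = ((0*a+1*b)*c + (0*c+1*d)*d) - (0*c+1*d) := by ring
    rw [← pow_one (X:Polynomial K), e]; exact hQ.2
  -- idempotency relations for G
  have hP' := LinearMap.congr_fun hGG (jmk K y 1, jmk K 2 0)
  rw [LinearMap.comp_apply, hGapp, hGapp, Prod.mk.injEq, jmk_eq_iff, jmk_eq_iff] at hP'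
  have hI1' : (X:Polynomial K)^y ∣ a'*a' + c'*b' - a' := by
    have e : (a'*a' + c'*b' : Polynomial K) - a'
        = ((1*a'+0*b')*a' + (1*c'+0*d')*b') - (1*a'+0*b') := by ring
    rw [e]; exact hP'.1
  have hI2' : (X:Polynomial K)^2 ∣ a'*c' + c'*d' - c' := by
    have e : (a'*c' + c'*d' : Polynomial K) - c'
        = ((1*a'+0*b')*c' + (1*c'+0*d')*d') - (1*c'+0*d') := by ring
    rw [e]; exact hP'.2
  have hQ' := LinearMap.congr_fun hGG (jmk K y 0, jmk K 2 1)
  rw [LinearMap.comp_apply, hGapp, hGapp, Prod.mk.injEq, jmk_eq_iff, jmk_eq_iff] at hQ'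
  have hI3' : (X:Polynomial K)^y ∣ b'*a' + d'*b' - b' := by
    have e : (b'*a' + d'*b' : Polynomial K) - b'
        = ((0*a'+1*b')*a' + (0*c'+1*d')*b') - (0*a'+1*b') := by ring
    rw [e]; exact hQ'.1
  have hI4' : (X:Polynomial K)^2 ∣ b'*c' + d'*d' - d' := by
    have e : (b'*c' + d'*d' : Polynomial K) - d'
        = ((0*a'+1*b')*c' + (0*c'+1*d')*d') - (0*c'+1*d') := by ring
    rw [e]; exact hQ'.2
  obtain ⟨ε, hεε, ha, hc, hb, hd, ha', hc', hb', hd'⟩ :=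
    main_poly t y ht hy a b c d a' b' c' d' hb2 hR1 hR2 hR3 hR4
      hI1 hI2 hI3 hI4 hI1' hI2' hI3' hI4'
  rcases mul_eq_zero.mp (show ε*(ε-1) = 0 by linear_combination hεε) with h0 | h1
  · -- ε = 0 : F = 0 and G = 0
    left
    rw [show (C ε : Polynomial K) = 0 by rw [h0, map_zero], sub_zero] at ha hd ha' hd'
    constructor
    · refine lin_ext F 0 ?_ ?_
      · rw [hFe1, LinearMap.zero_apply, Prod.mk_eq_zero, jmk_zero_iff, jmk_zero_iff]
        exact ⟨ha, by rw [pow_one]; exact hc⟩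
      · rw [hFe2, LinearMap.zero_apply, Prod.mk_eq_zero, jmk_zero_iff, jmk_zero_iff]
        exact ⟨hb, by rw [pow_one]; exact hd⟩
    · refine lin_ext G 0 ?_ ?_
      · rw [hGe1, LinearMap.zero_apply, Prod.mk_eq_zero, jmk_zero_iff, jmk_zero_iff]
        exact ⟨ha', hc'⟩
      · rw [hGe2, LinearMap.zero_apply, Prod.mk_eq_zero, jmk_zero_iff, jmk_zero_iff]
        exact ⟨hb', hd'⟩
  · -- ε = 1 : F = id and G = id
    right
    rw [show (C ε : Polynomial K) = 1 by rw [sub_eq_zero.mp h1, map_one]] at ha hd ha' hd'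
    constructor
    · refine lin_ext F LinearMap.id ?_ ?_
      · rw [hFe1, LinearMap.id_apply, Prod.mk.injEq, jmk_eq_iff, jmk_eq_iff]
        exact ⟨ha, by rw [pow_one, sub_zero]; exact hc⟩
      · rw [hFe2, LinearMap.id_apply, Prod.mk.injEq, jmk_eq_iff, jmk_eq_iff]
        exact ⟨by rw [sub_zero]; exact hb, by rw [pow_one]; exact hd⟩
    · refine lin_ext G LinearMap.id ?_ ?_
      · rw [hGe1, LinearMap.id_apply, Prod.mk.injEq, jmk_eq_iff, jmk_eq_iff]
        exact ⟨ha', by rw [sub_zero]; exact hc'⟩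
      · rw [hGe2, LinearMap.id_apply, Prod.mk.injEq, jmk_eq_iff, jmk_eq_iff]
        exact ⟨by rw [sub_zero]; exact hb', hd'⟩
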